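/- Let 𝒜 ∈ Sp(2d,ℝ) and assume E_𝒜 is invertible. Then the 2d×2d matrix G_𝒜 := L·E_𝒜^{−1}·ℰ_𝒜 is symplectic, i.e. G_𝒜 ∈ Sp(d,ℝ). -/
import Mathlib


open Matrix

/-- Index type for `2d × 2d` matrices, viewed as two `d`-blocks. -/
abbrev I2 (d : ℕ) := Fin d ⊕ Fin d

/-- Index type for `4d × 4d` matrices, viewed as four `d`-blocks. -/
abbrev I4 (d : ℕ) := I2 d ⊕ I2 d

/-- The standard symplectic matrix `J = [[0, I], [-I, 0]]`. -/
def symplJ (α : Type*) [Fintype α] [DecidableEq α] : Matrix (α ⊕ α) (α ⊕ α) ℝ :=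
  fromBlocks 0 1 (-1) 0

/-- `A` is symplectic if `Aᵀ J A = J`. -/
def IsSymplectic {α : Type*} [Fintype α] [DecidableEq α]
    (A : Matrix (α ⊕ α) (α ⊕ α) ℝ) : Prop :=
  Aᵀ * symplJ α * A = symplJ α

/-- Embedding of the "odd" block columns (blocks 1 and 3) of a `4d×4d` matrix. -/
def colOdd (d : ℕ) : I2 d → I4 d :=
  Sum.elim (fun i => Sum.inl (Sum.inl i)) (fun i => Sum.inr (Sum.inl i))

/-- Embedding of the "even" block columns (blocks 2 and 4) of a `4d×4d` matrix. -/
def colEven (d : ℕ) : I2 d → I4 d :=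
  Sum.elim (fun i => Sum.inl (Sum.inr i)) (fun i => Sum.inr (Sum.inr i))

/-- `E_𝒜 = [[A₁₁, A₁₃], [A₂₁, A₂₃]]`. -/
def subE {d : ℕ} (A : Matrix (I4 d) (I4 d) ℝ) : Matrix (I2 d) (I2 d) ℝ :=
  A.submatrix Sum.inl (colOdd d)

/-- `ℰ_𝒜 = [[A₁₂, A₁₄], [A₂₂, A₂₄]]`. -/
def subEE {d : ℕ} (A : Matrix (I4 d) (I4 d) ℝ) : Matrix (I2 d) (I2 d) ℝ :=
  A.submatrix Sum.inl (colEven d)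

/-- `F_𝒜 = [[A₃₁, A₃₃], [A₄₁, A₄₃]]`. -/
def subF {d : ℕ} (A : Matrix (I4 d) (I4 d) ℝ) : Matrix (I2 d) (I2 d) ℝ :=
  A.submatrix Sum.inr (colOdd d)

/-- `ℱ_𝒜 = [[A₃₂, A₃₄], [A₄₂, A₄₄]]`. -/
def subFF {d : ℕ} (A : Matrix (I4 d) (I4 d) ℝ) : Matrix (I2 d) (I2 d) ℝ :=
  A.submatrix Sum.inr (colEven d)

/-- Row/column embedding of the `i`-th `d`-block (i = 1,2,3,4). -/
def r1 (d : ℕ) : Fin d → I4 d := fun i => Sum.inl (Sum.inl i)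
def r2 (d : ℕ) : Fin d → I4 d := fun i => Sum.inl (Sum.inr i)
def r3 (d : ℕ) : Fin d → I4 d := fun i => Sum.inr (Sum.inl i)
def r4 (d : ℕ) : Fin d → I4 d := fun i => Sum.inr (Sum.inr i)

/-- The `d×d` block `A_{ij}` of a `4d×4d` matrix, given the row and column embeddings. -/
def blk {d : ℕ} (A : Matrix (I4 d) (I4 d) ℝ) (ri cj : Fin d → I4 d) :
    Matrix (Fin d) (Fin d) ℝ :=
  A.submatrix ri cj

/-- The symmetric matrix `M_𝒜` associated with a symplectic `4d×4d` matrix `𝒜`. -/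
def Mmat {d : ℕ} (A : Matrix (I4 d) (I4 d) ℝ) : Matrix (I2 d) (I2 d) ℝ :=
  fromBlocks
    ((blk A (r1 d) (r1 d))ᵀ * blk A (r3 d) (r1 d) + (blk A (r2 d) (r1 d))ᵀ * blk A (r4 d) (r1 d))
    ((blk A (r3 d) (r1 d))ᵀ * blk A (r1 d) (r3 d) + (blk A (r4 d) (r1 d))ᵀ * blk A (r2 d) (r3 d))
    ((blk A (r1 d) (r3 d))ᵀ * blk A (r3 d) (r1 d) + (blk A (r2 d) (r3 d))ᵀ * blk A (r4 d) (r1 d))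
    ((blk A (r1 d) (r3 d))ᵀ * blk A (r3 d) (r3 d) + (blk A (r2 d) (r3 d))ᵀ * blk A (r4 d) (r3 d))

/-- `𝒟_E = [[E⁻¹, 0], [0, Eᵀ]]`. -/
noncomputable def Dmat {α : Type*} [Fintype α] [DecidableEq α] (E : Matrix α α ℝ) :
    Matrix (α ⊕ α) (α ⊕ α) ℝ :=
  fromBlocks E⁻¹ 0 0 Eᵀ

/-- `V_C = [[I, 0], [C, I]]`. -/
def Vmat {α : Type*} [Fintype α] [DecidableEq α] (C : Matrix α α ℝ) :
    Matrix (α ⊕ α) (α ⊕ α) ℝ :=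
  fromBlocks 1 0 C 1

/-- `L = [[0, I], [I, 0]]` (`2d × 2d`). -/
def Lmat (d : ℕ) : Matrix (I2 d) (I2 d) ℝ :=
  fromBlocks 0 1 1 0

/-- `Lift(G)`: the `4d×4d` matrix with block rows `[I,0,0,0]`, `[0,G₁₁,0,G₁₂]`,
`[0,0,I,0]`, `[0,G₂₁,0,G₂₂]`. -/
def Lift {d : ℕ} (G : Matrix (I2 d) (I2 d) ℝ) : Matrix (I4 d) (I4 d) ℝ :=
  fromBlocks
    (fromBlocks 1 0 0 (G.submatrix Sum.inl Sum.inl))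
    (fromBlocks 0 0 0 (G.submatrix Sum.inl Sum.inr))
    (fromBlocks 0 0 0 (G.submatrix Sum.inr Sum.inl))
    (fromBlocks 1 0 0 (G.submatrix Sum.inr Sum.inr))
/-- If `𝒜 ∈ Sp(2d,ℝ)` and `E_𝒜` is invertible, then `G_𝒜 = L·E_𝒜⁻¹·ℰ_𝒜 ∈ Sp(d,ℝ)`. -/
theorem Gmat_symplectic (d : ℕ) (𝒜 : Matrix (I4 d) (I4 d) ℝ) (h𝒜 : IsSymplectic 𝒜)
    (hE : IsUnit (subE 𝒜)) :
    IsSymplectic (Lmat d * (subE 𝒜)⁻¹ * subEE 𝒜) := by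
  classical
  set J1 := symplJ (Fin d) with hJ1
  set E := subE 𝒜 with hEdef
  set EE := subEE 𝒜 with hEEdef
  set F := subF 𝒜 with hFdef
  set FF := subFF 𝒜 with hFFdef
  have hdet : IsUnit E.det := (Matrix.isUnit_iff_isUnit_det E).mp hE
  have hEr : E * E⁻¹ = 1 := Matrix.mul_nonsing_inv E hdet
  -- the column regrouping
  set f : I2 d ⊕ I2 d → I4 d := Sum.elim (colOdd d) (colEven d) with hf
  have hB : 𝒜.submatrix id f = fromBlocks E EE F FF := by
    ext i j
    rcases i with i | i <;> rcases j with j | j <;> rfl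
  have h1 : (𝒜ᵀ * symplJ (I2 d) * 𝒜).submatrix f f
      = (𝒜.submatrix id f)ᵀ * symplJ (I2 d) * (𝒜.submatrix id f) := by
    ext i j
    simp [Matrix.mul_apply, Matrix.submatrix_apply, Matrix.transpose_apply,
      Finset.sum_mul, Finset.mul_sum]
  have h2 : (symplJ (I2 d)).submatrix f f = fromBlocks J1 0 0 J1 := by
    ext i j
    rcases i with (i | i) | (i | i) <;> rcases j with (j | j) | (j | j) <;>
      simp [symplJ, hf, colOdd, colEven, hJ1, Matrix.one_apply]
  have key : (fromBlocks E EE F FF)ᵀ * symplJ (I2 d) * fromBlocks E EE F FF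
      = fromBlocks J1 0 0 J1 := by
    rw [hB] at h1
    rw [h𝒜, h2] at h1
    exact h1.symm
  have key' : fromBlocks (-(Fᵀ * E) + Eᵀ * F) (-(Fᵀ * EE) + Eᵀ * FF)
      (-(FFᵀ * E) + EEᵀ * F) (-(FFᵀ * EE) + EEᵀ * FF) = fromBlocks J1 0 0 J1 := by
    rw [← key]
    rw [show symplJ (I2 d) = fromBlocks 0 1 (-1) 0 from rfl,
      Matrix.fromBlocks_transpose, Matrix.fromBlocks_multiply,
      Matrix.fromBlocks_multiply]
    simp [Matrix.neg_mul]
  have h11 : -(Fᵀ * E) + Eᵀ * F = J1 := by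
    have := congrArg Matrix.toBlocks₁₁ key'
    simpa [Matrix.toBlocks_fromBlocks₁₁] using this
  have h21 : -(FFᵀ * E) + EEᵀ * F = 0 := by
    have := congrArg Matrix.toBlocks₂₁ key'
    simpa [Matrix.toBlocks_fromBlocks₂₁] using this
  have h22 : -(FFᵀ * EE) + EEᵀ * FF = J1 := by
    have := congrArg Matrix.toBlocks₂₂ key'
    simpa [Matrix.toBlocks_fromBlocks₂₂] using this
  have h21' : EEᵀ * F = FFᵀ * E := by
    have := h21
    linear_combination (norm := abel) this
  have hinvT : (E⁻¹)ᵀ * Eᵀ = 1 := by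
    rw [← Matrix.transpose_mul, hEr, Matrix.transpose_one]
  have hLJL : (Lmat d)ᵀ * J1 * Lmat d = -J1 := by
    ext i j
    rcases i with i | i <;> rcases j with j | j <;>
      simp [Lmat, symplJ, hJ1, Matrix.fromBlocks_transpose, Matrix.fromBlocks_multiply]
  have t1 : EEᵀ * F * (E⁻¹ * EE) = FFᵀ * EE := by
    rw [h21', ← Matrix.mul_assoc, Matrix.mul_assoc FFᵀ E, hEr, Matrix.mul_one]
  have t2 : EEᵀ * (E⁻¹)ᵀ * Fᵀ * EE = EEᵀ * FF := by
    have h := congrArg Matrix.transpose t1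
    simp only [Matrix.transpose_mul, Matrix.transpose_transpose] at h
    rw [Matrix.mul_assoc (EEᵀ * (E⁻¹)ᵀ)]
    exact h
  have main : EEᵀ * (E⁻¹)ᵀ * J1 * (E⁻¹ * EE) = -J1 := by
    conv_lhs => rw [← h11]
    have expand : EEᵀ * (E⁻¹)ᵀ * (-(Fᵀ * E) + Eᵀ * F) * (E⁻¹ * EE)
        = -((EEᵀ * (E⁻¹)ᵀ * Fᵀ) * ((E * E⁻¹) * EE))
          + (EEᵀ * ((E⁻¹)ᵀ * Eᵀ)) * (F * (E⁻¹ * EE)) := by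
      noncomm_ring
    rw [expand, hinvT, hEr, Matrix.mul_one, Matrix.one_mul,
      ← Matrix.mul_assoc EEᵀ F, t1]
    have : EEᵀ * (E⁻¹)ᵀ * Fᵀ * EE = EEᵀ * FF := t2
    rw [this]
    linear_combination (norm := abel) -h22
  show (Lmat d * E⁻¹ * EE)ᵀ * J1 * (Lmat d * E⁻¹ * EE) = J1
  calc (Lmat d * E⁻¹ * EE)ᵀ * J1 * (Lmat d * E⁻¹ * EE)
      = EEᵀ * ((E⁻¹)ᵀ * (((Lmat d)ᵀ * (J1 * (Lmat d * (E⁻¹ * EE)))))) := by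
        simp only [Matrix.transpose_mul, Matrix.mul_assoc]
    _ = EEᵀ * (E⁻¹)ᵀ * ((Lmat d)ᵀ * J1 * Lmat d) * (E⁻¹ * EE) := by
        simp only [Matrix.mul_assoc]
    _ = EEᵀ * (E⁻¹)ᵀ * (-J1) * (E⁻¹ * EE) := by rw [hLJL]
    _ = -(EEᵀ * (E⁻¹)ᵀ * J1 * (E⁻¹ * EE)) := by
        simp only [Matrix.mul_neg, Matrix.neg_mul]
    _ = J1 := by rw [main, neg_neg]
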